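/- If |T| = 1 (a single time period), then in any optimal solution of the VLB market clearing LP with all S_v > 0, it cannot hold that p^{C,a}_1 > 0 and sum_v p^{D,e}_{v,1} > 0 simultaneously. -/
import Mathlib


open Finset

/-- Data of the market-clearing LP with virtual linking bids (VLB), with `nT` time
periods (Δt = 1), `nL` loads, `nG` generators and `nV` stored inter-storage values. -/
structure MarketData (nT nL nG nV : ℕ) where
  /-- load utilities -/
  U : Fin nL → Fin nT → ℝ
  /-- generation costs -/
  C : Fin nG → Fin nT → ℝ
  /-- inter-storage bid prices (saved charging prices) -/
  S : Fin nV → ℝ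
  /-- generation capacities -/
  Pbar : Fin nG → Fin nT → ℝ
  /-- maximum loads -/
  Dbar : Fin nL → Fin nT → ℝ
  /-- initial inter-storage energy for each value -/
  Einit : Fin nV → ℝ
  /-- storage capacity -/
  Ebar : ℝ
  /-- required final storage level -/
  Eend : ℝ

/-- A point (candidate solution) of the VLB market-clearing LP. -/
structure Sol (nT nL nG nV : ℕ) where
  /-- accepted load quantities -/
  d : Fin nL → Fin nT → ℝ
  /-- accepted generation quantities -/
  p : Fin nG → Fin nT → ℝ
  /-- intra-storage charge (can be negative) -/
  pC : Fin nT → ℝ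
  /-- inter-storage discharge for each value -/
  pD : Fin nV → Fin nT → ℝ

variable {nT nL nG nV : ℕ}

/-- Combined storage level at the end of period `t`:
`∑_{i≤t} p^{C,a}_i + ∑_v (E^init_v − ∑_{i≤t} p^{D,e}_{v,i})`. -/
def level (M : MarketData nT nL nG nV) (x : Sol nT nL nG nV) (t : Fin nT) : ℝ :=
  (∑ i ∈ Finset.univ.filter (fun i => i ≤ t), x.pC i)
    + ∑ v, (M.Einit v - ∑ i ∈ Finset.univ.filter (fun i => i ≤ t), x.pD v i)

/-- Feasibility for the VLB market-clearing LP. -/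
def Feasible (M : MarketData nT nL nG nV) (x : Sol nT nL nG nV) : Prop :=
  (∀ t, (∑ l, x.d l t) + x.pC t - (∑ g, x.p g t) - (∑ v, x.pD v t) = 0) ∧
  (∀ g t, 0 ≤ x.p g t ∧ x.p g t ≤ M.Pbar g t) ∧
  (∀ l t, 0 ≤ x.d l t ∧ x.d l t ≤ M.Dbar l t) ∧
  (0 ≤ ∑ i, x.pC i) ∧
  (∀ t, 0 ≤ level M x t ∧ level M x t ≤ M.Ebar) ∧
  (∀ v t, 0 ≤ x.pD v t) ∧
  (∀ v, ∑ i, x.pD v i ≤ M.Einit v) ∧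
  (M.Eend ≤ (∑ i, x.pC i) + ∑ v, (M.Einit v - ∑ i, x.pD v i))

/-- Objective of the VLB market-clearing LP. -/
def Obj (M : MarketData nT nL nG nV) (x : Sol nT nL nG nV) : ℝ :=
  ∑ t, ((∑ l, M.U l t * x.d l t) - (∑ g, M.C g t * x.p g t)
    - ∑ v, M.S v * x.pD v t)

/-- Optimality for the VLB market-clearing LP. -/
def IsOptimal (M : MarketData nT nL nG nV) (x : Sol nT nL nG nV) : Prop :=
  Feasible M x ∧ ∀ y, Feasible M y → Obj M y ≤ Obj M x

/-- With a single time period, no optimal solution of the VLB market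
clearing (with all `S_v > 0`) has simultaneously `p^{C,a}_1 > 0` and `∑_v p^{D,e}_{v,1} > 0`. -/
theorem single_period_no_simultaneous_charge_discharge
    (M : MarketData 1 nL nG nV) (x : Sol 1 nL nG nV)
    (hS : ∀ v, 0 < M.S v) (hopt : IsOptimal M x) :
    ¬ (0 < x.pC 0 ∧ 0 < ∑ v, x.pD v 0) := by
  rintro ⟨hpC, hpDs⟩
  obtain ⟨hfeas, hbest⟩ := hopt
  set Sd := ∑ v, x.pD v 0 with hSdef
  have hSd0 : 0 < Sd := hpDs
  set ε := min (x.pC 0) Sd with hεdef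
  have hε0 : 0 < ε := lt_min hpC hSd0
  have hεS : ε ≤ Sd := min_le_right _ _
  have hεC : ε ≤ x.pC 0 := min_le_left _ _
  set c := 1 - ε / Sd with hcdef
  have hc0 : 0 ≤ c := by
    rw [hcdef, sub_nonneg]
    exact (div_le_one hSd0).mpr hεS
  have hc1 : c < 1 := by
    have h := div_pos hε0 hSd0
    rw [hcdef]; linarith
  have hcS : c * Sd = Sd - ε := by
    rw [hcdef]; field_simp
  set y : Sol 1 nL nG nV :=
    ⟨x.d, x.p, fun _ => x.pC 0 - ε, fun v _ => c * x.pD v 0⟩ with hydef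
  have hysum : ∑ v, y.pD v 0 = Sd - ε := by
    show ∑ v, c * x.pD v 0 = Sd - ε
    rw [← Finset.mul_sum, ← hSdef, hcS]
  have hfilter : (Finset.univ.filter (fun i : Fin 1 => i ≤ 0)) = Finset.univ := by
    ext i; simp [Subsingleton.elim i (0 : Fin 1)]
  have hpDnn := hfeas.2.2.2.2.2.1
  have hlevel : level M y 0 = level M x 0 := by
    show (∑ i ∈ Finset.univ.filter (fun i : Fin 1 => i ≤ 0), y.pC i)
        + ∑ v, (M.Einit v - ∑ i ∈ Finset.univ.filter (fun i : Fin 1 => i ≤ 0), y.pD v i)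
      = (∑ i ∈ Finset.univ.filter (fun i : Fin 1 => i ≤ 0), x.pC i)
        + ∑ v, (M.Einit v - ∑ i ∈ Finset.univ.filter (fun i : Fin 1 => i ≤ 0), x.pD v i)
    simp only [hfilter, Fin.sum_univ_one]
    rw [Finset.sum_sub_distrib, Finset.sum_sub_distrib, hysum, ← hSdef]
    show x.pC 0 - ε + _ = _
    ring
  have hyfeas : Feasible M y := by
    obtain ⟨h1, h2, h3, h4, h5, h6, h7, h8⟩ := hfeas
    refine ⟨?_, ?_, ?_, ?_, ?_, ?_, ?_, ?_⟩
    · intro t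
      rw [Subsingleton.elim t (0 : Fin 1)]
      have hb := h1 0
      show ∑ l, x.d l 0 + (x.pC 0 - ε) - ∑ g, x.p g 0 - ∑ v, y.pD v 0 = 0
      rw [hysum, ← hSdef] at *
      linarith
    · intro g t
      rw [Subsingleton.elim t (0 : Fin 1)]
      exact h2 g 0
    · intro l t
      rw [Subsingleton.elim t (0 : Fin 1)]
      exact h3 l 0
    · show 0 ≤ ∑ i : Fin 1, y.pC i
      rw [Fin.sum_univ_one]
      show (0:ℝ) ≤ x.pC 0 - ε
      linarith
    · intro t
      rw [Subsingleton.elim t (0 : Fin 1), hlevel]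
      exact h5 0
    · intro v t
      exact mul_nonneg hc0 (hpDnn v 0)
    · intro v
      rw [Fin.sum_univ_one]
      have h := h7 v
      rw [Fin.sum_univ_one] at h
      show c * x.pD v 0 ≤ M.Einit v
      nlinarith [hpDnn v 0]
    · simp only [Fin.sum_univ_one] at h8 ⊢
      have hsplit : ∑ v, (M.Einit v - y.pD v 0) = ∑ v, (M.Einit v - x.pD v 0) + ε := by
        rw [Finset.sum_sub_distrib, Finset.sum_sub_distrib, hysum, ← hSdef]; ring
      rw [hsplit]
      show M.Eend ≤ x.pC 0 - ε + (∑ v, (M.Einit v - x.pD v 0) + ε)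
      linarith
  have hSpos : 0 < ∑ v, M.S v * x.pD v 0 := by
    obtain ⟨v, hv⟩ : ∃ v, 0 < x.pD v 0 := by
      by_contra h
      push_neg at h
      have hle : Sd ≤ 0 := Finset.sum_nonpos (fun v _ => h v)
      linarith
    exact Finset.sum_pos' (fun w _ => mul_nonneg (hS w).le (hpDnn w 0))
      ⟨v, Finset.mem_univ v, mul_pos (hS v) hv⟩
  have hobj : Obj M x < Obj M y := by
    simp only [Obj, Fin.sum_univ_one]
    have hy : ∑ v, M.S v * y.pD v 0 = c * ∑ v, M.S v * x.pD v 0 := by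
      rw [Finset.mul_sum]
      exact Finset.sum_congr rfl (fun v _ => by show M.S v * (c * x.pD v 0) = _; ring)
    rw [hy]
    show (∑ l, M.U l 0 * x.d l 0) - (∑ g, M.C g 0 * x.p g 0) - ∑ v, M.S v * x.pD v 0
      < (∑ l, M.U l 0 * x.d l 0) - (∑ g, M.C g 0 * x.p g 0) - c * ∑ v, M.S v * x.pD v 0
    nlinarith
  exact absurd (hbest y hyfeas) (not_le.mpr hobj)
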